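/- Let F be a field and I = (X^{10}, Y^5, XY^4, X^8Y) in F[X,Y]. Then X^7Y^3·I ⊆ I^2 and X^7Y^3 ∉ I; hence X^7Y^3 ∈ ~I \ I and I is not Ratliff-Rush closed. (Thus a zero-dimensional monomial ideal of F[X,Y] generated by 4 = 2 + 2 monomials need not be Ratliff-Rush closed.) -/

import Mathlib

/-- The Ratliff-Rush closure of the power `I^n`:  `⋃_{k≥0} (I^{n+k} : I^k)`. -/
noncomputable def rrPow {R : Type*} [CommRing R] (I : Ideal R) (n : ℕ) : Ideal R :=
  ⨆ k : ℕ, (I ^ (n + k)).colon ((I ^ k : Ideal R) : Set R)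

/-- For `I = (X^10, Y^5, XY^4, X^8Y)` in `F[X,Y]`: `X^7Y^3·I ⊆ I^2` and `X^7Y^3 ∉ I`;
hence `X^7Y^3 ∈ ~I \ I` and `I` is not Ratliff-Rush closed. -/
theorem stmt_13 (F : Type*) [Field F]
    (X Y : MvPolynomial (Fin 2) F)
    (hX : X = MvPolynomial.X 0) (hY : Y = MvPolynomial.X 1)
    (I : Ideal (MvPolynomial (Fin 2) F))
    (hI : I = Ideal.span {X ^ 10, Y ^ 5, X * Y ^ 4, X ^ 8 * Y}) :
    (∀ f ∈ I, X ^ 7 * Y ^ 3 * f ∈ I ^ 2) ∧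
    X ^ 7 * Y ^ 3 ∉ I ∧
    X ^ 7 * Y ^ 3 ∈ rrPow I 1 ∧
    rrPow I 1 ≠ I := by
  have hg1 : X ^ 10 ∈ I := hI ▸ Ideal.subset_span (by simp)
  have hg2 : Y ^ 5 ∈ I := hI ▸ Ideal.subset_span (by simp)
  have hg3 : X * Y ^ 4 ∈ I := hI ▸ Ideal.subset_span (by simp)
  have hg4 : X ^ 8 * Y ∈ I := hI ▸ Ideal.subset_span (by simp)
  have h1 : ∀ f ∈ I, X ^ 7 * Y ^ 3 * f ∈ I ^ 2 := by
    have key : I ≤ (I ^ 2).colon (Ideal.span {X ^ 7 * Y ^ 3}) := by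
      conv_lhs => rw [hI]
      rw [Ideal.span_le]
      rintro g hg
      simp only [Set.mem_insert_iff, Set.mem_singleton_iff] at hg
      rw [SetLike.mem_coe, Ideal.mem_colon_span_singleton]
      rcases hg with rfl | rfl | rfl | rfl
      · have e : X ^ 10 * (X ^ 7 * Y ^ 3) = X * Y * (X ^ 8 * Y * (X ^ 8 * Y)) := by ring
        rw [e]
        exact Ideal.mul_mem_left _ _ (by rw [pow_two]; exact Ideal.mul_mem_mul hg4 hg4)
      · have e : Y ^ 5 * (X ^ 7 * Y ^ 3) = X ^ 5 * (X * Y ^ 4 * (X * Y ^ 4)) := by ring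
        rw [e]
        exact Ideal.mul_mem_left _ _ (by rw [pow_two]; exact Ideal.mul_mem_mul hg3 hg3)
      · have e : X * Y ^ 4 * (X ^ 7 * Y ^ 3) = Y * (X ^ 8 * Y * (Y ^ 5)) := by ring
        rw [e]
        exact Ideal.mul_mem_left _ _ (by rw [pow_two]; exact Ideal.mul_mem_mul hg4 hg2)
      · have e : X ^ 8 * Y * (X ^ 7 * Y ^ 3) = X ^ 4 * (X ^ 10 * (X * Y ^ 4)) := by ring
        rw [e]
        exact Ideal.mul_mem_left _ _ (by rw [pow_two]; exact Ideal.mul_mem_mul hg1 hg3)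
    intro f hf
    have := key hf
    rw [Ideal.mem_colon_span_singleton] at this
    rwa [mul_comm] at this
  have h2 : X ^ 7 * Y ^ 3 ∉ I := by
    intro hmem
    set m : Fin 2 →₀ ℕ := Finsupp.single 0 7 + Finsupp.single 1 3 with hm
    have em : X ^ 7 * Y ^ 3 = MvPolynomial.monomial m 1 := by
      rw [hX, hY, MvPolynomial.X_pow_eq_monomial, MvPolynomial.X_pow_eq_monomial,
        MvPolynomial.monomial_mul, one_mul]
    have e1 : X ^ 10 = MvPolynomial.monomial (Finsupp.single (0 : Fin 2) 10) (1 : F) := by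
      rw [hX, MvPolynomial.X_pow_eq_monomial]
    have e2 : Y ^ 5 = MvPolynomial.monomial (Finsupp.single (1 : Fin 2) 5) (1 : F) := by
      rw [hY, MvPolynomial.X_pow_eq_monomial]
    have e3 : X * Y ^ 4 = MvPolynomial.monomial
        (Finsupp.single (0 : Fin 2) 1 + Finsupp.single 1 4) (1 : F) := by
      rw [hX, hY, MvPolynomial.X_pow_eq_monomial, ← pow_one (MvPolynomial.X (0 : Fin 2)),
        MvPolynomial.X_pow_eq_monomial, MvPolynomial.monomial_mul, one_mul]
    have e4 : X ^ 8 * Y = MvPolynomial.monomial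
        (Finsupp.single (0 : Fin 2) 8 + Finsupp.single 1 1) (1 : F) := by
      rw [hX, hY, MvPolynomial.X_pow_eq_monomial, ← pow_one (MvPolynomial.X (1 : Fin 2)),
        MvPolynomial.X_pow_eq_monomial, MvPolynomial.monomial_mul, one_mul]
    rw [hI] at hmem
    rw [show ({X ^ 10, Y ^ 5, X * Y ^ 4, X ^ 8 * Y} : Set (MvPolynomial (Fin 2) F)) =
      insert (X ^ 10) (insert (Y ^ 5) (insert (X * Y ^ 4) {X ^ 8 * Y})) from rfl] at hmem
    rw [Ideal.span, Submodule.mem_span_insert] at hmem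
    obtain ⟨p1, z1, hz1, h5⟩ := hmem
    rw [Submodule.mem_span_insert] at hz1
    obtain ⟨p2, z2, hz2, h6⟩ := hz1
    rw [Submodule.mem_span_insert] at hz2
    obtain ⟨p3, z3, hz3, h7⟩ := hz2
    rw [Submodule.mem_span_singleton] at hz3
    obtain ⟨p4, h8⟩ := hz3
    subst h6 h7
    rw [← h8] at h5
    have hc := congrArg (MvPolynomial.coeff m) h5
    have hn1 : ¬ Finsupp.single (0 : Fin 2) 10 ≤ m := by
      rw [Finsupp.single_le_iff]
      simp [hm, Finsupp.single_apply]
    have hn2 : ¬ Finsupp.single (1 : Fin 2) 5 ≤ m := by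
      rw [Finsupp.single_le_iff]
      simp [hm, Finsupp.single_apply]
    have hn3 : ¬ (Finsupp.single (0 : Fin 2) 1 + Finsupp.single 1 4 ≤ m) := by
      intro h
      have := h 1
      simp [hm, Finsupp.single_apply] at this
    have hn4 : ¬ (Finsupp.single (0 : Fin 2) 8 + Finsupp.single 1 1 ≤ m) := by
      intro h
      have := h 0
      simp [hm, Finsupp.single_apply] at this
    rw [em, e1, e2, e3, e4] at hc
    simp only [smul_eq_mul, MvPolynomial.coeff_add, MvPolynomial.coeff_mul_monomial',
      if_neg hn1, if_neg hn2, if_neg hn3, if_neg hn4, MvPolynomial.coeff_monomial,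
      if_pos rfl, add_zero, zero_add] at hc
    exact one_ne_zero hc
  have h3 : X ^ 7 * Y ^ 3 ∈ rrPow I 1 := by
    have hc : X ^ 7 * Y ^ 3 ∈ (I ^ (1 + 1)).colon ((I ^ 1 : Ideal (MvPolynomial (Fin 2) F)) : Set (MvPolynomial (Fin 2) F)) := by
      rw [Submodule.mem_colon]
      intro p hp
      rw [pow_one] at hp
      simpa [smul_eq_mul] using h1 p hp
    exact le_iSup (fun k : ℕ => (I ^ (1 + k)).colon ((I ^ k : Ideal (MvPolynomial (Fin 2) F)) : Set (MvPolynomial (Fin 2) F))) 1 hc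
  exact ⟨h1, h2, h3, fun h => h2 (h ▸ h3)⟩
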